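/- Let G : ℝ × ℝ → ℝ be C², 1-periodic in its second variable, with ∂_r G and ∂²_{rr} G bounded, and let a ∈ ℝ be such that c_0 := ∫_0^1 ∂_r G(a, x) dx ≠ 0. Let ζ : ℝ → ℝ be nonnegative, continuous and supported in (0,1). Suppose that for each η ∈ (0,1), S_η ∈ ℝ satisfies |S_η| ≤ Cη for some C > 0 and the identity (1 − η) ∫_0^1 G(a + S_η, x) dx + η ∫_0^1 G(ζ(x) + a + S_η, x) dx = ∫_0^1 G(a, x) dx. Then lim_{η→0^+} S_η/η = −c_0^{−1} ∫_0^1 ( G(ζ(x) + a, x) − G(a, x) ) dx. -/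

import Mathlib

open MeasureTheory Filter Topology Set

noncomputable section

lemma lipOf (f : ℝ → ℝ) (hf : Differentiable ℝ f) (M : ℝ)
    (hM : ∀ r, |deriv f r| ≤ M) (a s : ℝ) : |f s - f a| ≤ M * |s - a| := by
  have := Convex.norm_image_sub_le_of_norm_deriv_le (f := f)
    (fun x _ => hf x) (fun x _ => hM x) (convex_univ)
    (mem_univ a) (mem_univ s)
  simpa [Real.norm_eq_abs] using this

lemma taylor1 (f : ℝ → ℝ) (hf : ContDiff ℝ 2 f) (M : ℝ)
    (hM : ∀ r, |deriv (deriv f) r| ≤ M) (a s : ℝ) :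
    |f s - f a - (s - a) * deriv f a| ≤ M * (s - a)^2 := by
  have h2 : ContDiff ℝ (1+1) f := by norm_num; exact hf
  have hd := contDiff_succ_iff_deriv.mp h2
  have hd1 : Differentiable ℝ f := hd.1
  have hd' : Differentiable ℝ (deriv f) := hd.2.2.differentiable one_ne_zero
  have hLip : ∀ t, |deriv f t - deriv f a| ≤ M * |t - a| :=
    fun t => lipOf (deriv f) hd' M hM a t
  set g : ℝ → ℝ := fun t => f t - f a - (t - a) * deriv f a with hg
  have hgd : Differentiable ℝ g := by
    apply Differentiable.sub
    · exact hd1.sub_const _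
    · exact (differentiable_id.sub_const a).mul_const _
  have hgderiv : ∀ t, deriv g t = deriv f t - deriv f a := by
    intro t
    have : HasDerivAt g (deriv f t - deriv f a) t := by
      have h1 : HasDerivAt f (deriv f t) t := (hd1 t).hasDerivAt
      have h2 : HasDerivAt (fun t => (t - a) * deriv f a) (deriv f a) t := by
        simpa using ((hasDerivAt_id t).sub_const a).mul_const (deriv f a)
      exact (h1.sub_const (f a)).sub h2
    exact this.deriv
  have key := Convex.norm_image_sub_le_of_norm_deriv_le (f := g) (C := M * |s - a|)
    (fun x _ => hgd x) (fun x (hx : x ∈ uIcc a s) => ?_) (convex_uIcc a s)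
    (right_mem_uIcc (a := a) (b := s)) (left_mem_uIcc (a := a) (b := s))
  · have hga : g a = 0 := by simp [hg]
    have : |g s| ≤ M * |s - a| * |s - a| := by
      simpa [hga, Real.norm_eq_abs, abs_sub_comm s a] using key
    calc |f s - f a - (s - a) * deriv f a| = |g s| := rfl
      _ ≤ M * |s - a| * |s - a| := this
      _ = M * (s-a)^2 := by rw [mul_assoc, ← abs_mul, ← sq, abs_sq]
  · rw [hgderiv]
    have hM0 : 0 ≤ M := le_trans (abs_nonneg _) (hM a)
    calc ‖deriv f x - deriv f a‖ = |deriv f x - deriv f a| := rfl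
      _ ≤ M * |x - a| := hLip x
      _ ≤ M * |s - a| := by
          apply mul_le_mul_of_nonneg_left _ hM0
          simpa [abs_sub_comm] using abs_sub_left_of_mem_uIcc hx

/-- the real-analysis core of the one-dimensional random (Bernoulli)
asymptotic expansion: if `|S_η| ≤ C η` and
`(1-η) ∫_0^1 G(a + S_η, x) dx + η ∫_0^1 G(ζ(x) + a + S_η, x) dx = ∫_0^1 G(a, x) dx`
for all `η ∈ (0,1)`, then `S_η/η → -c₀⁻¹ ∫_0^1 (G(ζ(x) + a, x) - G(a, x)) dx`. -/
theorem one_dim_expansion_core_random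
    (G : ℝ → ℝ → ℝ) (hG : ContDiff ℝ 2 fun q : ℝ × ℝ => G q.1 q.2)
    (hGper : ∀ r x : ℝ, G r (x + 1) = G r x)
    (hD1 : ∃ M : ℝ, ∀ r x : ℝ, |deriv (fun s => G s x) r| ≤ M)
    (hD2 : ∃ M : ℝ, ∀ r x : ℝ, |deriv (deriv fun s => G s x) r| ≤ M)
    (a c₀ : ℝ) (hc₀ : c₀ = ∫ x in (0 : ℝ)..1, deriv (fun s => G s x) a) (hc₀ne : c₀ ≠ 0)
    (ζ : ℝ → ℝ) (hζ0 : ∀ x, 0 ≤ ζ x) (hζc : Continuous ζ)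
    (hζs : Function.support ζ ⊆ Set.Ioo (0 : ℝ) 1)
    (S : ℝ → ℝ) (C : ℝ) (hC : 0 < C) (hS : ∀ η ∈ Set.Ioo (0 : ℝ) 1, |S η| ≤ C * η)
    (heq : ∀ η ∈ Set.Ioo (0 : ℝ) 1,
      (1 - η) * ∫ x in (0 : ℝ)..1, G (a + S η) x
        + η * ∫ x in (0 : ℝ)..1, G (ζ x + a + S η) x
        = ∫ x in (0 : ℝ)..1, G a x) :
    Tendsto (fun η => S η / η) (𝓝[>] (0 : ℝ))
      (𝓝 (-c₀⁻¹ * ∫ x in (0 : ℝ)..1, (G (ζ x + a) x - G a x))) := by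
  obtain ⟨M₁, hM₁⟩ := hD1
  obtain ⟨M₂, hM₂⟩ := hD2
  have hM₁0 : 0 ≤ M₁ := le_trans (abs_nonneg _) (hM₁ 0 0)
  have hM₂0 : 0 ≤ M₂ := le_trans (abs_nonneg _) (hM₂ 0 0)
  set F : ℝ × ℝ → ℝ := fun q => G q.1 q.2 with hF
  have hfx : ∀ x : ℝ, ContDiff ℝ 2 (fun s => G s x) := fun x =>
    hG.comp (contDiff_id.prodMk contDiff_const)
  have hfxd : ∀ x : ℝ, Differentiable ℝ (fun s => G s x) := fun x =>
    (hfx x).differentiable two_ne_zero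
  -- continuity of integrands
  have cont1 : ∀ r : ℝ, Continuous fun x => G r x := fun r =>
    hG.continuous.comp (continuous_const.prodMk continuous_id)
  have cont2 : ∀ s : ℝ, Continuous fun x => G (ζ x + a + s) x := fun s =>
    hG.continuous.comp (((hζc.add continuous_const).add continuous_const).prodMk continuous_id)
  -- derivative as fderiv, continuity of x ↦ ∂ᵣG(a,x)
  have hasD : ∀ r x : ℝ, HasDerivAt (fun s => G s x)
      (fderiv ℝ F (r, x) (1, 0)) r := by
    intro r x
    have hFd : HasFDerivAt F (fderiv ℝ F (r, x)) (r, x) :=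
      ((hG.differentiable two_ne_zero) (r, x)).hasFDerivAt
    have hg : HasDerivAt (fun s : ℝ => (s, x)) ((1 : ℝ), (0 : ℝ)) r :=
      (hasDerivAt_id r).prodMk (hasDerivAt_const r x)
    exact hFd.comp_hasDerivAt r hg
  have Deq : (fun x => deriv (fun s => G s x) a) = fun x => fderiv ℝ F (a, x) (1, 0) :=
    funext fun x => (hasD a x).deriv
  have Dcont : Continuous fun x => deriv (fun s => G s x) a := by
    rw [Deq]
    exact ((hG.continuous_fderiv two_ne_zero).comp
      (continuous_const.prodMk continuous_id)).clm_apply continuous_const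
  have cont2' : Continuous fun x => G (ζ x + a) x :=
    hG.continuous.comp ((hζc.add continuous_const).prodMk continuous_id)
  set B₀ : ℝ := ∫ x in (0 : ℝ)..1, G (ζ x + a) x with hB₀
  set I : ℝ := ∫ x in (0 : ℝ)..1, (G (ζ x + a) x - G a x) with hI
  set L : ℝ := -c₀⁻¹ * I with hL
  set K : ℝ := (2 * M₁ * C + M₂ * C ^ 2 + (M₁ * C + |B₀|)) / |c₀| with hK
  have hc₀abs : 0 < |c₀| := abs_pos.mpr hc₀ne
  -- main bound
  have key : ∀ η ∈ Set.Ioo (0 : ℝ) 1, |S η / η - L| ≤ K * η := by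
    intro η hη
    obtain ⟨hη0, hη1⟩ := hη
    set s := S η with hs
    have hsb : |s| ≤ C * η := hS η ⟨hη0, hη1⟩
    set A : ℝ := ∫ x in (0 : ℝ)..1, G (a + s) x with hA
    set B : ℝ := ∫ x in (0 : ℝ)..1, G (ζ x + a + s) x with hB
    set A₀ : ℝ := ∫ x in (0 : ℝ)..1, G a x with hA₀
    -- Step 1 : |A - A₀ - s c₀| ≤ M₂ s²
    have step1 : |A - A₀ - s * c₀| ≤ M₂ * s ^ 2 := by
      have hint : (∫ x in (0 : ℝ)..1,
          (G (a + s) x - G a x - s * deriv (fun t => G t x) a))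
          = A - A₀ - s * c₀ := by
        rw [intervalIntegral.integral_sub, intervalIntegral.integral_sub,
          intervalIntegral.integral_const_mul, hc₀]
        · exact ((cont1 (a + s)).intervalIntegrable 0 1)
        · exact ((cont1 a).intervalIntegrable 0 1)
        · exact (((cont1 (a + s)).sub (cont1 a)).intervalIntegrable 0 1)
        · exact (((continuous_const.mul Dcont : Continuous fun x => s * deriv (fun t => G t x) a)).intervalIntegrable 0 1)
      have hbd : ∀ x ∈ Set.uIoc (0 : ℝ) 1,
          ‖G (a + s) x - G a x - s * deriv (fun t => G t x) a‖ ≤ M₂ * s ^ 2 := by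
        intro x _
        have := taylor1 (fun t => G t x) (hfx x) M₂ (fun r => hM₂ r x) a (a + s)
        simpa [Real.norm_eq_abs, add_sub_cancel_left] using this
      have := intervalIntegral.norm_integral_le_of_norm_le_const hbd
      rw [hint] at this
      simpa [Real.norm_eq_abs] using this
    -- Step 2 : |(B - A) - I| ≤ 2 M₁ |s|
    have step2 : |(B - A) - I| ≤ 2 * M₁ * |s| := by
      have hint : (∫ x in (0 : ℝ)..1,
          ((G (ζ x + a + s) x - G (a + s) x) - (G (ζ x + a) x - G a x)))
          = (B - A) - I := by
        rw [intervalIntegral.integral_sub, intervalIntegral.integral_sub]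
        · exact ((cont2 s).intervalIntegrable 0 1)
        · exact ((cont1 (a + s)).intervalIntegrable 0 1)
        · exact (((cont2 s).sub (cont1 (a + s))).intervalIntegrable 0 1)
        · exact ((cont2'.sub (cont1 a)).intervalIntegrable 0 1)
      have hbd : ∀ x ∈ Set.uIoc (0 : ℝ) 1,
          ‖(G (ζ x + a + s) x - G (a + s) x) - (G (ζ x + a) x - G a x)‖
            ≤ 2 * M₁ * |s| := by
        intro x _
        have h1 : |G (ζ x + a + s) x - G (ζ x + a) x| ≤ M₁ * |s| := by
          have := lipOf (fun t => G t x) (hfxd x) M₁ (fun r => hM₁ r x)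
            (ζ x + a) (ζ x + a + s)
          simpa [add_sub_cancel_left] using this
        have h2 : |G (a + s) x - G a x| ≤ M₁ * |s| := by
          have := lipOf (fun t => G t x) (hfxd x) M₁ (fun r => hM₁ r x) a (a + s)
          simpa [add_sub_cancel_left] using this
        have htri : |(G (ζ x + a + s) x - G (a + s) x) - (G (ζ x + a) x - G a x)|
            ≤ |G (ζ x + a + s) x - G (ζ x + a) x| + |G (a + s) x - G a x| := by
          have : (G (ζ x + a + s) x - G (a + s) x) - (G (ζ x + a) x - G a x)
              = (G (ζ x + a + s) x - G (ζ x + a) x) - (G (a + s) x - G a x) := by ring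
          rw [this]
          exact abs_sub _ _
        calc ‖(G (ζ x + a + s) x - G (a + s) x) - (G (ζ x + a) x - G a x)‖
            ≤ |G (ζ x + a + s) x - G (ζ x + a) x| + |G (a + s) x - G a x| := htri
          _ ≤ M₁ * |s| + M₁ * |s| := add_le_add h1 h2
          _ = 2 * M₁ * |s| := by ring
      have := intervalIntegral.norm_integral_le_of_norm_le_const hbd
      rw [hint] at this
      simpa [Real.norm_eq_abs] using this
    -- bound on B
    have hBb : |B| ≤ M₁ * C + |B₀| := by
      have hbd : ∀ x ∈ Set.uIoc (0 : ℝ) 1,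
          ‖G (ζ x + a + s) x - G (ζ x + a) x‖ ≤ M₁ * |s| := by
        intro x _
        have := lipOf (fun t => G t x) (hfxd x) M₁ (fun r => hM₁ r x)
          (ζ x + a) (ζ x + a + s)
        simpa [add_sub_cancel_left] using this
      have h1 := intervalIntegral.norm_integral_le_of_norm_le_const hbd
      rw [intervalIntegral.integral_sub ((cont2 s).intervalIntegrable 0 1)
        (cont2'.intervalIntegrable 0 1)] at h1
      have h2 : |B - B₀| ≤ M₁ * |s| := by simpa [Real.norm_eq_abs] using h1
      have h3 : |s| ≤ C := le_trans hsb (by nlinarith)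
      calc |B| = |(B - B₀) + B₀| := by ring_nf
        _ ≤ |B - B₀| + |B₀| := abs_add_le _ _
        _ ≤ M₁ * |s| + |B₀| := by linarith
        _ ≤ M₁ * C + |B₀| := by nlinarith
    -- Step 3 : the identity gives A - A₀ = η (A - B) + η² B
    have hAB : A - A₀ = η * (A - B) + η ^ 2 * B := by
      have hsplit : (∫ x in (0 : ℝ)..1, (G (a + s) x + η * B)) = A + η * B := by
        rw [intervalIntegral.integral_add ((cont1 (a + s)).intervalIntegrable 0 1)
          intervalIntegrable_const]
        simp [hA]
      have h0 := heq η ⟨hη0, hη1⟩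
      rw [← hs, ← hB, hsplit] at h0
      linear_combination h0
    -- Step 4
    have step4 : |s * c₀ + η * I|
        ≤ (2 * M₁ * C + M₂ * C ^ 2 + (M₁ * C + |B₀|)) * η ^ 2 := by
      have hid : s * c₀ + η * I
          = -(A - A₀ - s * c₀) - η * ((B - A) - I) + η ^ 2 * B := by
        linear_combination hAB
      rw [hid]
      have hsq : s ^ 2 ≤ (C * η) ^ 2 := by
        calc s ^ 2 = |s| ^ 2 := (sq_abs s).symm
          _ ≤ (C * η) ^ 2 := by
              apply sq_le_sq' _ hsb
              linarith [abs_nonneg s, neg_abs_le s]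
      calc |-(A - A₀ - s * c₀) - η * ((B - A) - I) + η ^ 2 * B|
          ≤ |A - A₀ - s * c₀| + |η| * |(B - A) - I| + |η| ^ 2 * |B| := by
            have h1 : |-(A - A₀ - s * c₀) - η * ((B - A) - I) + η ^ 2 * B|
                ≤ |-(A - A₀ - s * c₀) - η * ((B - A) - I)| + |η ^ 2 * B| :=
              abs_add_le _ _
            have h2 : |-(A - A₀ - s * c₀) - η * ((B - A) - I)|
                ≤ |A - A₀ - s * c₀| + |η| * |(B - A) - I| := by
              rw [← abs_neg (A - A₀ - s * c₀), ← abs_mul]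
              exact abs_sub _ _
            have h3 : |η ^ 2 * B| = |η| ^ 2 * |B| := by
              rw [abs_mul, abs_pow]
            linarith
        _ ≤ M₂ * (C * η) ^ 2 + η * (2 * M₁ * (C * η)) + η ^ 2 * (M₁ * C + |B₀|) := by
            rw [abs_of_pos hη0]
            apply add_le_add (add_le_add ?_ ?_) ?_
            · exact le_trans step1 (mul_le_mul_of_nonneg_left hsq hM₂0)
            · apply mul_le_mul_of_nonneg_left _ hη0.le
              exact le_trans step2 (mul_le_mul_of_nonneg_left hsb (by positivity))
            · apply mul_le_mul_of_nonneg_left hBb (by positivity)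
        _ = (2 * M₁ * C + M₂ * C ^ 2 + (M₁ * C + |B₀|)) * η ^ 2 := by ring
    -- conclude
    have hηne : η ≠ 0 := hη0.ne'
    have hrw : S η / η - L = (s * c₀ + η * I) / (η * c₀) := by
      rw [hL]
      field_simp
      rw [hs]; ring
    rw [hrw, abs_div, abs_mul, abs_of_pos hη0]
    rw [div_le_iff₀ (by positivity)]
    calc |s * c₀ + η * I|
        ≤ (2 * M₁ * C + M₂ * C ^ 2 + (M₁ * C + |B₀|)) * η ^ 2 := step4
      _ = K * η * (η * |c₀|) := by
          rw [hK]; field_simp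
  -- final squeeze
  have hmem : Set.Ioo (0 : ℝ) 1 ∈ 𝓝[>] (0 : ℝ) :=
    Ioo_mem_nhdsGT_of_mem ⟨le_refl 0, one_pos⟩
  rw [← tendsto_sub_nhds_zero_iff]
  apply squeeze_zero_norm' (a := fun η => K * η)
  · filter_upwards [hmem] with η hη
    exact key η hη
  · have : Tendsto (fun η : ℝ => K * η) (𝓝 (0 : ℝ)) (𝓝 (K * 0)) :=
      (continuous_const.mul continuous_id).tendsto 0
    simpa using this.mono_left nhdsWithin_le_nhds

end
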